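/- For every integer d ≥ 2, setting q = d^{d-2} and m = d^{d+3}, there exist m functions f_1, …, f_m from (ZMod q)^d to ZMod q such that for every subset S of (ZMod q)^d with |S| = d^d, at least one of the functions f_i restricted to S is surjective onto ZMod q. -/

import Mathlib

open Finset

lemma avoid_card {α β : Type*} [Fintype α] [Fintype β] [DecidableEq α] [DecidableEq β]
    (S : Finset α) (y : β) :
    (univ.filter (fun f : α → β => ∀ x ∈ S, f x ≠ y)).card
      = (Fintype.card β - 1) ^ S.card * Fintype.card β ^ (Fintype.card α - S.card) := by
  have he : (univ.filter (fun f : α → β => ∀ x ∈ S, f x ≠ y))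
      = Fintype.piFinset (fun x => if x ∈ S then ({y}ᶜ : Finset β) else univ) := by
    ext f
    simp only [mem_filter, Fintype.mem_piFinset, mem_univ, true_and]
    constructor
    · intro h x
      by_cases hx : x ∈ S <;> simp [hx, h x]
    · intro h x hx
      have := h x
      simp [hx] at this
      exact this
  rw [he, Fintype.card_piFinset,
    ← Finset.prod_filter_mul_prod_filter_not univ (fun x => x ∈ S)]
  have h1 : ∀ x ∈ univ.filter (fun x => x ∈ S),
      (if x ∈ S then ({y}ᶜ : Finset β) else univ).card = Fintype.card β - 1 := by
    intro x hx
    simp only [mem_filter] at hx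
    simp [hx.2, Finset.card_compl]
  have h2 : ∀ x ∈ univ.filter (fun x => ¬ x ∈ S),
      (if x ∈ S then ({y}ᶜ : Finset β) else univ).card = Fintype.card β := by
    intro x hx
    simp only [mem_filter] at hx
    simp [hx.2]
  rw [Finset.prod_congr rfl h1, Finset.prod_congr rfl h2, Finset.prod_const,
    Finset.prod_const]
  congr 1
  · congr 1
    simp [Finset.filter_mem_eq_inter]
  · congr 1
    rw [Finset.filter_not, Finset.filter_mem_eq_inter]
    simp only [Finset.univ_inter]
    rw [Finset.card_sdiff_of_subset (Finset.subset_univ S), Finset.card_univ]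

lemma badFun_card_le {α β : Type*} [Fintype α] [Fintype β] [DecidableEq α] [DecidableEq β]
    (S : Finset α) :
    (univ.filter (fun f : α → β => ∃ y, ∀ x ∈ S, f x ≠ y)).card
      ≤ Fintype.card β *
        ((Fintype.card β - 1) ^ S.card * Fintype.card β ^ (Fintype.card α - S.card)) := by
  have hsub : (univ.filter (fun f : α → β => ∃ y, ∀ x ∈ S, f x ≠ y))
      ⊆ univ.biUnion (fun y : β => univ.filter (fun f : α → β => ∀ x ∈ S, f x ≠ y)) := by
    intro f hf
    simp only [mem_filter, mem_univ, true_and] at hf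
    obtain ⟨y, hy⟩ := hf
    exact Finset.mem_biUnion.2 ⟨y, mem_univ y, Finset.mem_filter.2 ⟨mem_univ f, hy⟩⟩
  calc (univ.filter (fun f : α → β => ∃ y, ∀ x ∈ S, f x ≠ y)).card
      ≤ (univ.biUnion (fun y : β => univ.filter (fun f : α → β => ∀ x ∈ S, f x ≠ y))).card :=
        Finset.card_le_card hsub
    _ ≤ ∑ y : β, (univ.filter (fun f : α → β => ∀ x ∈ S, f x ≠ y)).card :=
        Finset.card_biUnion_le
    _ = ∑ _y : β, (Fintype.card β - 1) ^ S.card * Fintype.card β ^ (Fintype.card α - S.card) := by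
        exact Finset.sum_congr rfl (fun y _ => avoid_card S y)
    _ = Fintype.card β *
        ((Fintype.card β - 1) ^ S.card * Fintype.card β ^ (Fintype.card α - S.card)) := by
        rw [Finset.sum_const, Finset.card_univ, smul_eq_mul]

lemma badTuple_card {α β : Type*} [Fintype α] [Fintype β] [DecidableEq α] [DecidableEq β]
    (m : ℕ) (S : Finset α) :
    (univ.filter (fun F : Fin m → α → β => ∀ i, ∃ y, ∀ x ∈ S, F i x ≠ y)).card
      = (univ.filter (fun f : α → β => ∃ y, ∀ x ∈ S, f x ≠ y)).card ^ m := by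
  have he : (univ.filter (fun F : Fin m → α → β => ∀ i, ∃ y, ∀ x ∈ S, F i x ≠ y))
      = Fintype.piFinset (fun _ : Fin m =>
          univ.filter (fun f : α → β => ∃ y, ∀ x ∈ S, f x ≠ y)) := by
    ext F
    simp only [mem_filter, Fintype.mem_piFinset, mem_univ, true_and]
  rw [he, Fintype.card_piFinset, Finset.prod_const, Finset.card_univ, Fintype.card_fin]

lemma exists_good {α β : Type*} [Fintype α] [Fintype β] [DecidableEq α] [DecidableEq β]
    (m s : ℕ)
    (h : (Fintype.card α).choose s *
        (Fintype.card β *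
          ((Fintype.card β - 1) ^ s * Fintype.card β ^ (Fintype.card α - s))) ^ m
      < Fintype.card β ^ (Fintype.card α * m)) :
    ∃ f : Fin m → α → β, ∀ S : Finset α, S.card = s →
      ∃ i, ∀ y : β, ∃ x ∈ S, f i x = y := by
  set Bad : Finset (Fin m → α → β) :=
    univ.filter (fun F => ∃ S ∈ (univ : Finset α).powersetCard s, ∀ i, ∃ y, ∀ x ∈ S, F i x ≠ y) with hBad
  have hcard : Bad.card < Fintype.card (Fin m → α → β) := by
    have hsub : Bad ⊆ ((univ : Finset α).powersetCard s).biUnion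
        (fun S => univ.filter (fun F : Fin m → α → β => ∀ i, ∃ y, ∀ x ∈ S, F i x ≠ y)) := by
      intro F hF
      simp only [hBad, mem_filter, mem_univ, true_and] at hF
      obtain ⟨S, hS, hFS⟩ := hF
      exact Finset.mem_biUnion.2 ⟨S, hS, Finset.mem_filter.2 ⟨mem_univ F, hFS⟩⟩
    have hb : Bad.card ≤ ((univ : Finset α).powersetCard s).card *
        (Fintype.card β *
          ((Fintype.card β - 1) ^ s * Fintype.card β ^ (Fintype.card α - s))) ^ m := by
      calc Bad.card ≤ _ := Finset.card_le_card hsub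
        _ ≤ ∑ S ∈ (univ : Finset α).powersetCard s,
            (univ.filter (fun F : Fin m → α → β => ∀ i, ∃ y, ∀ x ∈ S, F i x ≠ y)).card :=
          Finset.card_biUnion_le
        _ ≤ ∑ S ∈ (univ : Finset α).powersetCard s,
            (Fintype.card β *
              ((Fintype.card β - 1) ^ s * Fintype.card β ^ (Fintype.card α - s))) ^ m := by
          refine Finset.sum_le_sum (fun S hS => ?_)
          rw [badTuple_card]
          have hScard : S.card = s := (Finset.mem_powersetCard.1 hS).2
          calc (univ.filter (fun f : α → β => ∃ y, ∀ x ∈ S, f x ≠ y)).card ^ m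
              ≤ (Fintype.card β *
                ((Fintype.card β - 1) ^ S.card *
                  Fintype.card β ^ (Fintype.card α - S.card))) ^ m :=
                Nat.pow_le_pow_left (badFun_card_le S) m
            _ = _ := by rw [hScard]
        _ = _ := by rw [Finset.sum_const, smul_eq_mul]
    have hps : ((univ : Finset α).powersetCard s : Finset (Finset α)).card = (Fintype.card α).choose s := by
      rw [Finset.card_powersetCard, Finset.card_univ]
    have htot : Fintype.card (Fin m → α → β) = Fintype.card β ^ (Fintype.card α * m) := by
      rw [Fintype.card_fun, Fintype.card_fun, Fintype.card_fin, ← pow_mul, mul_comm]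
    rw [htot]
    calc Bad.card ≤ _ := hb
      _ = (Fintype.card α).choose s *
          (Fintype.card β *
            ((Fintype.card β - 1) ^ s * Fintype.card β ^ (Fintype.card α - s))) ^ m := by
          rw [hps]
      _ < _ := h
  have hex : ∃ F : Fin m → α → β, F ∉ Bad := by
    by_contra hc
    push_neg at hc
    have : (univ : Finset (Fin m → α → β)) ⊆ Bad := fun F _ => hc F
    have := Finset.card_le_card this
    rw [Finset.card_univ] at this
    omega
  obtain ⟨F, hF⟩ := hex
  refine ⟨F, fun S hS => ?_⟩
  simp only [hBad, mem_filter, mem_univ, true_and] at hF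
  push_neg at hF
  have hSm : S ∈ (univ : Finset α).powersetCard s := Finset.mem_powersetCard.2 ⟨Finset.subset_univ S, hS⟩
  obtain ⟨i, hi⟩ := hF S hSm
  refine ⟨i, fun y => ?_⟩
  obtain ⟨x, hx, hxy⟩ := hi y
  exact ⟨x, hx, hxy⟩

lemma aux_pow (p : ℕ) : ∀ n, p ^ n * (p + n) ≤ (p + 1) ^ n * p := by
  intro n
  induction n with
  | zero => simp
  | succ n ih =>
    have h1 : p ^ n * p ≤ (p + 1) ^ n * p :=
      Nat.mul_le_mul_right p (Nat.pow_le_pow_left (Nat.le_succ p) n)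
    calc p ^ (n + 1) * (p + (n + 1)) = p ^ n * (p + n) * p + p ^ n * p := by ring
      _ ≤ (p + 1) ^ n * p * p + (p + 1) ^ n * p := by
          exact Nat.add_le_add (Nat.mul_le_mul_right p ih) h1
      _ = (p + 1) ^ (n + 1) * p := by ring

lemma two_mul_pred_pow (q : ℕ) (hq : 1 ≤ q) : 2 * (q - 1) ^ q ≤ q ^ q := by
  obtain ⟨p, rfl⟩ : ∃ p, q = p + 1 := ⟨q - 1, by omega⟩
  simp only [Nat.add_sub_cancel]
  have h := aux_pow p (p + 1)
  -- p^(p+1) * (p + (p+1)) ≤ (p+1)^(p+1) * p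
  rcases Nat.eq_zero_or_pos p with hp | hp
  · subst hp; simp
  · have h2 : 2 * p ^ (p + 1) * p ≤ p ^ (p + 1) * (p + (p + 1)) := by
      calc 2 * p ^ (p + 1) * p = p ^ (p + 1) * (2 * p) := by ring
        _ ≤ p ^ (p + 1) * (2 * p + 1) := Nat.mul_le_mul_left _ (by omega)
        _ = p ^ (p + 1) * (p + (p + 1)) := by ring
    exact Nat.le_of_mul_le_mul_right (by calc 2 * (p ^ (p+1)) * p = 2 * p ^ (p+1) * p := by ring
      _ ≤ (p + 1) ^ (p + 1) * p := le_trans h2 h) hp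

lemma core_ineq (q s m K ds : ℕ) (hq : 2 ≤ q) (hA : s * m = q * K)
    (hB : q ^ (ds + m) < 2 ^ K) :
    q ^ ds * q ^ m * (q - 1) ^ (s * m) < q ^ (s * m) := by
  have hpos : 0 < (q - 1) ^ (s * m) := Nat.pow_pos (by omega)
  calc q ^ ds * q ^ m * (q - 1) ^ (s * m)
      = q ^ (ds + m) * (q - 1) ^ (s * m) := by rw [pow_add]
    _ < 2 ^ K * (q - 1) ^ (s * m) := (Nat.mul_lt_mul_right hpos).2 hB
    _ = (2 * (q - 1) ^ q) ^ K := by rw [hA, pow_mul, mul_pow]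
    _ ≤ (q ^ q) ^ K := Nat.pow_le_pow_left (two_mul_pred_pow q (by omega)) K
    _ = q ^ (s * m) := by rw [hA, pow_mul]

lemma small_ineq (d : ℕ) (hd : 3 ≤ d) :
    (d - 1) * (d - 2) * (1 + d ^ 2) < d ^ 4 := by
  obtain ⟨k, rfl⟩ : ∃ k, d = k + 3 := ⟨d - 3, by omega⟩
  have h1 : k + 3 - 1 = k + 2 := by omega
  have h2 : k + 3 - 2 = k + 1 := by omega
  rw [h1, h2]
  nlinarith [sq_nonneg k, k.zero_le]

lemma exp_ineq (d : ℕ) (hd : 3 ≤ d) :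
    (d - 1) * (d - 2) * (d * d ^ d + d ^ (d + 3)) < d ^ (d + 5) := by
  have h1 : d * d ^ d + d ^ (d + 3) = (1 + d ^ 2) * d ^ (d + 1) := by
    rw [pow_add, pow_add]; ring
  have h2 : d ^ (d + 5) = d ^ 4 * d ^ (d + 1) := by rw [← pow_add]; ring_nf
  rw [h1, h2, ← mul_assoc]
  exact (Nat.mul_lt_mul_right (Nat.pow_pos (by omega))).2 (small_ineq d hd)

lemma arith (d : ℕ) (hd : 2 ≤ d) :
    ((d ^ (d - 2)) ^ d).choose (d ^ d) *
      (d ^ (d - 2) *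
        ((d ^ (d - 2) - 1) ^ (d ^ d) *
          (d ^ (d - 2)) ^ ((d ^ (d - 2)) ^ d - d ^ d))) ^ (d ^ (d + 3))
      < (d ^ (d - 2)) ^ ((d ^ (d - 2)) ^ d * d ^ (d + 3)) := by
  rcases Nat.lt_or_ge d 3 with hd2 | hd3
  · have : d = 2 := by omega
    subst this
    norm_num
  set q := d ^ (d - 2) with hqdef
  set s := d ^ d with hsdef
  set m := d ^ (d + 3) with hmdef
  set N := q ^ d with hNdef
  have hd1 : 1 ≤ d := by omega
  have hqd : d ≤ q := by
    calc d = d ^ 1 := (pow_one d).symm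
      _ ≤ d ^ (d - 2) := Nat.pow_le_pow_right hd1 (by omega)
  have hq2 : 2 ≤ q := by omega
  have hsN : s ≤ N := by
    rw [hNdef, hqdef, ← pow_mul, hsdef]
    exact Nat.pow_le_pow_right hd1 (Nat.le_mul_of_pos_left d (by omega))
  have hA : s * m = q * d ^ (d + 5) := by
    rw [hsdef, hmdef, hqdef, ← pow_add, ← pow_add]
    congr 1
    omega
  have hd2pow : d ≤ 2 ^ (d - 1) := by
    have := Nat.lt_two_pow_self (n := d - 1)
    omega
  have hB : q ^ (d * s + m) < 2 ^ (d ^ (d + 5)) := by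
    calc q ^ (d * s + m) ≤ (2 ^ ((d - 1) * (d - 2))) ^ (d * s + m) := by
          refine Nat.pow_le_pow_left ?_ _
          rw [hqdef]
          calc d ^ (d - 2) ≤ (2 ^ (d - 1)) ^ (d - 2) := Nat.pow_le_pow_left hd2pow _
            _ = 2 ^ ((d - 1) * (d - 2)) := by rw [← pow_mul]
      _ = 2 ^ ((d - 1) * (d - 2) * (d * s + m)) := by rw [← pow_mul]
      _ < 2 ^ (d ^ (d + 5)) := by
          refine Nat.pow_lt_pow_right one_lt_two ?_
          rw [hsdef, hmdef]
          exact exp_ineq d hd3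
  have hkey : q ^ (d * s) * q ^ m * (q - 1) ^ (s * m) < q ^ (s * m) :=
    core_ineq q s m (d ^ (d + 5)) (d * s) hq2 hA hB
  have hq0 : 0 < q := by omega
  calc N.choose s * (q * ((q - 1) ^ s * q ^ (N - s))) ^ m
      ≤ N ^ s * (q * ((q - 1) ^ s * q ^ (N - s))) ^ m :=
        Nat.mul_le_mul_right _ (Nat.choose_le_pow N s)
    _ = q ^ (d * s) * q ^ m * (q - 1) ^ (s * m) * q ^ ((N - s) * m) := by
        rw [hNdef, ← pow_mul, mul_pow, mul_pow, ← pow_mul, ← pow_mul]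
        ring
    _ < q ^ (s * m) * q ^ ((N - s) * m) :=
        (Nat.mul_lt_mul_right (Nat.pow_pos hq0)).2 hkey
    _ = q ^ (N * m) := by
        rw [← pow_add, ← Nat.add_mul, Nat.add_sub_cancel' hsN]



/-- For every integer `d ≥ 2`, with `q = d ^ (d - 2)` and `m = d ^ (d + 3)`,
there exist `m` functions from `(ZMod q)^d` to `ZMod q` such that for every subset `S` of
`(ZMod q)^d` of size `d ^ d`, at least one of the functions restricted to `S` is surjective
onto `ZMod q`. -/
theorem exists_onto_guessing_functions (d : ℕ) (hd : 2 ≤ d) :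
    ∃ f : Fin (d ^ (d + 3)) → (Fin d → ZMod (d ^ (d - 2))) → ZMod (d ^ (d - 2)),
      ∀ S : Finset (Fin d → ZMod (d ^ (d - 2))), S.card = d ^ d →
        ∃ i, ∀ y : ZMod (d ^ (d - 2)), ∃ x ∈ S, f i x = y := by
  haveI : NeZero (d ^ (d - 2)) := ⟨by positivity⟩
  refine exists_good (d ^ (d + 3)) (d ^ d) ?_
  have hcβ : Fintype.card (ZMod (d ^ (d - 2))) = d ^ (d - 2) := ZMod.card _
  have hcα : Fintype.card (Fin d → ZMod (d ^ (d - 2))) = (d ^ (d - 2)) ^ d := by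
    rw [Fintype.card_fun, hcβ, Fintype.card_fin]
  rw [hcα, hcβ]
  exact arith d hd
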